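/- Define ĥ : ℝ^{n−1} → ℝ by ĥ(P̂) := κ⁻¹·‖π_k^⊥(Âᵀ P̂)‖². Then the determinant of the Hessian of ĥ is constant and equals 2^{n−1}·‖k‖^{−2n}, i.e. det(∂²_{P̂P̂} ĥ) = 2^{n−1} κ^{−n}. -/

import Mathlib

open scoped Matrix

/-- Euclidean dot product on `Fin n → ℝ`. -/
def edot {n : ℕ} (x y : Fin n → ℝ) : ℝ := ∑ i, x i * y i

/-- Orthogonal projection onto the hyperplane orthogonal to `k`. -/
noncomputable def eproj {n : ℕ} (k y : Fin n → ℝ) : Fin n → ℝ :=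
  y - ((∑ i, k i ^ 2)⁻¹ * edot y k) • k

/-- The Hessian matrix of second partial derivatives of `g : ℝ^m → ℝ` at `y`. -/
noncomputable def hessianM {n : ℕ} (g : (Fin n → ℝ) → ℝ) (y : Fin n → ℝ) :
    Matrix (Fin n) (Fin n) ℝ :=
  Matrix.of fun i j =>
    fderiv ℝ (fun z => fderiv ℝ g z (Pi.single j 1)) y (Pi.single i 1)

open ContinuousLinearMap

set_option linter.unusedSectionVars false

section aux
variable {p q r : Type*} [Fintype p] [Fintype q] [Fintype r] [DecidableEq p]

lemma my_mul_vecMulVec (A : Matrix p q ℝ) (u : q → ℝ) (v : r → ℝ) :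
    A * Matrix.vecMulVec u v = Matrix.vecMulVec (A *ᵥ u) v := by
  ext i j
  simp [Matrix.mul_apply, Matrix.vecMulVec_apply, Matrix.mulVec, dotProduct,
    Finset.sum_mul, mul_assoc]

lemma my_vecMulVec_mul (u : p → ℝ) (v : q → ℝ) (B : Matrix q r ℝ) :
    Matrix.vecMulVec u v * B = Matrix.vecMulVec u (v ᵥ* B) := by
  ext i j
  simp [Matrix.mul_apply, Matrix.vecMulVec_apply, Matrix.vecMul, dotProduct,
    Finset.mul_sum, mul_assoc]

lemma my_vecMulVec_mulVec (u : p → ℝ) (v : q → ℝ) (w : q → ℝ) :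
    Matrix.vecMulVec u v *ᵥ w = (v ⬝ᵥ w) • u := by
  ext i
  simp [Matrix.mulVec, Matrix.vecMulVec_apply, dotProduct, Finset.mul_sum, mul_assoc,
    mul_comm, mul_left_comm]

lemma my_sub_vecMulVec (x y : p → ℝ) (c : ℝ) (v : q → ℝ) :
    Matrix.vecMulVec (x - c • y) v = Matrix.vecMulVec x v - c • Matrix.vecMulVec y v := by
  ext i j
  simp [Matrix.vecMulVec_apply]
  ring

end aux

set_option maxHeartbeats 1000000 in
lemma detAux (m : ℕ) (k : Fin (m + 1) → ℝ) (κ : ℝ) (hκ : κ ≠ 0) (hκk : k ⬝ᵥ k = κ)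
    (Ahat : Matrix (Fin m) (Fin (m + 1)) ℝ)
    (hdet : (Matrix.of fun (i j : Fin (m + 1)) =>
        if h : (i : ℕ) < m then Ahat ⟨i, h⟩ j else k j).det = 1) :
    (Ahat * (1 - κ⁻¹ • Matrix.vecMulVec k k) * Ahatᵀ).det = κ⁻¹ := by
  set A : Matrix (Fin (m + 1)) (Fin (m + 1)) ℝ :=
    Matrix.of fun (i j : Fin (m + 1)) =>
      if h : (i : ℕ) < m then Ahat ⟨i, h⟩ j else k j with hA
  set π : Matrix (Fin (m + 1)) (Fin (m + 1)) ℝ := 1 - κ⁻¹ • Matrix.vecMulVec k k with hπ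
  set e : Fin (m + 1) → ℝ := Pi.single (Fin.last m) 1 with he
  have hlast : ∀ j, A (Fin.last m) j = k j := by
    intro j
    simp [hA, Fin.last]
  have hrow : ∀ (i : Fin m) (a : Fin (m + 1)), A i.castSucc a = Ahat i a := by
    intro i a
    have h : ((i.castSucc : Fin (m + 1)) : ℕ) < m := i.isLt
    simp only [hA, Matrix.of_apply, dif_pos h]
    have : (⟨((i.castSucc : Fin (m+1)) : ℕ), h⟩ : Fin m) = i := Fin.ext (by simp)
    rw [this]
  have hAe : e ᵥ* A = k := by
    ext j
    simp [Matrix.vecMul, dotProduct, he, Pi.single_apply, ite_mul, hlast]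
  have hAkLast : (A *ᵥ k) (Fin.last m) = κ := by
    simp [Matrix.mulVec, dotProduct, hlast, ← hκk]
  have hπk : π *ᵥ k = 0 := by
    rw [hπ, Matrix.sub_mulVec, Matrix.one_mulVec, Matrix.smul_mulVec,
      my_vecMulVec_mulVec, hκk]
    ext i
    simp only [Matrix.smul_apply, Pi.sub_apply, Pi.smul_apply, smul_eq_mul, Pi.zero_apply]
    field_simp
    ring
  set N : Matrix (Fin (m + 1)) (Fin (m + 1)) ℝ :=
    A * π * Aᵀ + Matrix.vecMulVec e (A *ᵥ k) with hN
  have hN1 : N = (1 + Matrix.vecMulVec (e - κ⁻¹ • (A *ᵥ k)) e) * (A * Aᵀ) := by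
    rw [add_mul, one_mul, my_vecMulVec_mul, ← Matrix.vecMul_vecMul, hAe,
      Matrix.vecMul_transpose, my_sub_vecMulVec, hN, hπ]
    rw [Matrix.mul_sub, Matrix.mul_smul, Matrix.sub_mul, Matrix.smul_mul,
      my_mul_vecMulVec, my_vecMulVec_mul, Matrix.vecMul_transpose, Matrix.mul_one]
    abel
  have hdetN1 : N.det = 1 := by
    rw [hN1, Matrix.det_mul, Matrix.det_mul, hdet, Matrix.det_transpose, hdet,
      Matrix.vecMulVec_eq Unit, Matrix.det_one_add_replicateCol_mul_replicateRow]
    have h1 : e ⬝ᵥ (e - κ⁻¹ • (A *ᵥ k)) = 1 + -(κ⁻¹ * κ) := by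
      rw [dotProduct_sub, dotProduct_smul]
      congr 1
      · simp [he, dotProduct, Pi.single_apply]
      · rw [he, single_dotProduct, one_mul, hAkLast]
        simp
    rw [h1, inv_mul_cancel₀ hκ]
    norm_num
  have hcol : ∀ i, (A * π * Aᵀ) i (Fin.last m) = 0 := by
    intro i
    have : (A * π * Aᵀ) i (Fin.last m) = ((A * π) *ᵥ k) i := by
      simp [Matrix.mul_apply, Matrix.mulVec, dotProduct, Matrix.transpose_apply, hlast]
    rw [this, ← Matrix.mulVec_mulVec, hπk]
    simp
  have hsub : N.submatrix Fin.castSucc Fin.castSucc = Ahat * π * Ahatᵀ := by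
    ext i j
    have he0 : e i.castSucc = 0 := by
      simp [he, Pi.single_apply, (Fin.castSucc_lt_last i).ne]
    simp only [hN, Matrix.submatrix_apply, Matrix.add_apply, Matrix.vecMulVec_apply, he0,
      zero_mul, add_zero, Matrix.mul_apply, Matrix.transpose_apply, hrow]
  have hdetN2 : N.det = κ * (Ahat * π * Ahatᵀ).det := by
    rw [Matrix.det_succ_column N (Fin.last m)]
    rw [Finset.sum_eq_single (Fin.last m)]
    · rw [Fin.succAbove_last, hsub]
      have hNll : N (Fin.last m) (Fin.last m) = κ := by
        simp [hN, Matrix.add_apply, hcol, Matrix.vecMulVec_apply, he, hAkLast]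
      rw [hNll]
      have : (-1 : ℝ) ^ ((Fin.last m : ℕ) + (Fin.last m : ℕ)) = 1 :=
        Even.neg_one_pow ⟨m, rfl⟩
      rw [this, one_mul]
    · intro i _ hi
      have hNi : N i (Fin.last m) = 0 := by
        have he0 : e i = 0 := by simp [he, Pi.single_apply, hi]
        simp [hN, Matrix.add_apply, hcol, Matrix.vecMulVec_apply, he0]
      rw [hNi]
      ring
    · intro h
      exact absurd (Finset.mem_univ _) h
  rw [hdetN2] at hdetN1
  field_simp at hdetN1 ⊢
  linarith [hdetN1]

variable {n : ℕ}

lemma quad_hasFDerivAt (M : Matrix (Fin n) (Fin n) ℝ) (z : Fin n → ℝ) :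
    HasFDerivAt (fun P : Fin n → ℝ => ∑ i, ∑ j, M i j * P i * P j)
      (∑ i, ∑ j, M i j • ((z i) • (proj j : (Fin n → ℝ) →L[ℝ] ℝ) + (z j) • (proj i : (Fin n → ℝ) →L[ℝ] ℝ))) z := by
  apply HasFDerivAt.fun_sum
  intro i _
  apply HasFDerivAt.fun_sum
  intro j _
  have h1 : HasFDerivAt (fun P : Fin n → ℝ => P i * P j)
      ((z i) • (proj j : (Fin n → ℝ) →L[ℝ] ℝ) + (z j) • (proj i : (Fin n → ℝ) →L[ℝ] ℝ)) z :=
    (hasFDerivAt_apply i z).mul (hasFDerivAt_apply j z)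
  have := h1.const_mul (M i j)
  simpa [mul_assoc] using this

lemma lin_hasFDerivAt (c : Fin n → ℝ) (z : Fin n → ℝ) :
    HasFDerivAt (fun P : Fin n → ℝ => ∑ b, c b * P b)
      (∑ b, c b • (proj b : (Fin n → ℝ) →L[ℝ] ℝ)) z := by
  apply HasFDerivAt.fun_sum
  intro b _
  exact (hasFDerivAt_apply b z).const_mul (c b)

lemma hessian_quad (M : Matrix (Fin n) (Fin n) ℝ) (y : Fin n → ℝ) :
    hessianM (fun P : Fin n → ℝ => ∑ i, ∑ j, M i j * P i * P j) y = M + Mᵀ := by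
  have hf : ∀ (z : Fin n → ℝ) (a : Fin n),
      fderiv ℝ (fun P : Fin n → ℝ => ∑ i, ∑ j, M i j * P i * P j) z (Pi.single a 1)
        = ∑ b, (M a b + M b a) * z b := by
    intro z a
    rw [(quad_hasFDerivAt M z).fderiv]
    simp only [ContinuousLinearMap.coe_sum', Finset.sum_apply, ContinuousLinearMap.add_apply,
      ContinuousLinearMap.coe_smul', Pi.smul_apply, proj_apply, Pi.single_apply, smul_eq_mul]
    simp only [mul_add, mul_ite, mul_one, mul_zero, Finset.sum_add_distrib,
      Finset.sum_ite_eq', Finset.mem_univ, if_true]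
    rw [Finset.sum_comm (γ := Fin n)]
    simp only [Finset.sum_ite_eq', Finset.mem_univ, if_true, ← Finset.sum_add_distrib]
    exact Finset.sum_congr rfl fun b _ => by ring
  ext i j
  have : (fun z => fderiv ℝ (fun P : Fin n → ℝ => ∑ i, ∑ j, M i j * P i * P j) z (Pi.single j 1))
      = fun z => ∑ b, (M j b + M b j) * z b := funext fun z => hf z j
  rw [hessianM, Matrix.of_apply, this, (lin_hasFDerivAt _ y).fderiv]
  simp [Pi.single_apply, Matrix.transpose_apply]
  ring

theorem stmt_14 (m : ℕ) (hm : 1 ≤ m) (k : Fin (m + 1) → ℝ) (hk : k ≠ 0)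
    (Ahat : Matrix (Fin m) (Fin (m + 1)) ℝ)
    (hdet : (Matrix.of fun (i j : Fin (m + 1)) =>
        if h : (i : ℕ) < m then Ahat ⟨i, h⟩ j else k j).det = 1) :
    ∀ Phat : Fin m → ℝ,
      (hessianM
          (fun P : Fin m → ℝ =>
            (∑ i, k i ^ 2)⁻¹ * ∑ i, (eproj k (Ahatᵀ.mulVec P)) i ^ 2)
          Phat).det =
        2 ^ m / (∑ i, k i ^ 2) ^ (m + 1) := by
  intro Phat
  have hκk : k ⬝ᵥ k = ∑ i, k i ^ 2 := by
    simp [dotProduct, sq]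
  set κ : ℝ := ∑ i, k i ^ 2 with hκdef
  have hκpos : 0 < κ := by
    rcases Function.ne_iff.1 hk with ⟨i, hi⟩
    exact Finset.sum_pos' (fun j _ => sq_nonneg _)
      ⟨i, Finset.mem_univ i, lt_of_le_of_ne (sq_nonneg _) (Ne.symm (pow_ne_zero 2 hi))⟩
  have hκ : κ ≠ 0 := ne_of_gt hκpos
  set π : Matrix (Fin (m + 1)) (Fin (m + 1)) ℝ := 1 - κ⁻¹ • Matrix.vecMulVec k k with hπ
  set M : Matrix (Fin m) (Fin m) ℝ := κ⁻¹ • (Ahat * π * Ahatᵀ) with hM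
  have hπmulVec : ∀ w : Fin (m + 1) → ℝ, π *ᵥ w = w - (κ⁻¹ * (k ⬝ᵥ w)) • k := by
    intro w
    rw [hπ, Matrix.sub_mulVec, Matrix.one_mulVec, Matrix.smul_mulVec,
      my_vecMulVec_mulVec, smul_smul]
  have hfun : (fun P : Fin m → ℝ =>
      κ⁻¹ * ∑ i, (eproj k (Ahatᵀ.mulVec P)) i ^ 2)
      = fun P => ∑ i, ∑ j, M i j * P i * P j := by
    funext P
    have hRHS : ∑ i, ∑ j, M i j * P i * P j = P ⬝ᵥ (M *ᵥ P) := by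
      simp only [dotProduct, Matrix.mulVec, Finset.mul_sum]
      exact Finset.sum_congr rfl fun i _ => Finset.sum_congr rfl fun j _ => by ring
    rw [hRHS, hM, Matrix.smul_mulVec, dotProduct_smul,
      ← Matrix.mulVec_mulVec, ← Matrix.mulVec_mulVec, Matrix.dotProduct_mulVec,
      ← Matrix.mulVec_transpose, hπmulVec, smul_eq_mul]
    set w : Fin (m + 1) → ℝ := Ahatᵀ *ᵥ P with hw
    have hLHS : ∑ i, (eproj k w) i ^ 2 = (w - (κ⁻¹ * (w ⬝ᵥ k)) • k) ⬝ᵥ (w - (κ⁻¹ * (w ⬝ᵥ k)) • k) := by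
      simp only [eproj, edot]
      rw [← hκdef]
      simp [dotProduct, sq]
    rw [hLHS]
    rw [sub_dotProduct, dotProduct_sub, dotProduct_sub,
      smul_dotProduct, smul_dotProduct, dotProduct_smul,
      dotProduct_smul, dotProduct_sub, dotProduct_smul, hκk]
    simp only [smul_eq_mul]
    have hcomm : k ⬝ᵥ w = w ⬝ᵥ k := dotProduct_comm k w
    rw [hcomm]
    field_simp
    ring
  rw [hfun, hessian_quad]
  have hMT : Mᵀ = M := by
    have hπT : πᵀ = π := by
      ext i j
      simp [hπ, Matrix.transpose_apply, Matrix.sub_apply, Matrix.one_apply,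
        Matrix.smul_apply, Matrix.vecMulVec_apply, eq_comm, mul_comm]
    rw [hM, Matrix.transpose_smul, Matrix.transpose_mul, Matrix.transpose_mul,
      Matrix.transpose_transpose, hπT, Matrix.mul_assoc]
  rw [hMT, ← two_smul ℝ M, Matrix.det_smul, hM, Matrix.det_smul,
    detAux m k κ hκ hκk Ahat hdet]
  simp only [Fintype.card_fin]
  rw [pow_succ]
  field_simp
  rw [one_div, inv_pow, inv_mul_cancel₀ (pow_ne_zero _ hκ)]
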